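/- Let a, b, c, d be real constants with a ≠ 1 and c ≠ 1, and suppose (x_n)_{n≥-1}, (y_n)_{n≥-1} solve the constant-coefficient system with x_n ≠ 0 and y_n ≠ 0 for all n. Then for every n ≥ 0, x_{2n-1} = x_{-1}^{1-n}·(x_0·y_{-1}/y_0)^n·∏_{s=0}^{n-1} [(c^{2s} + d·x_{-1}·y_0·(1 - c^{2s})/(1 - c)) / (a^{2s+1} + b·x_0·y_{-1}·(1 - a^{2s+1})/(1 - a))] and x_{2n} = x_0^{n+1}·(y_{-1}/(x_{-1}·y_0))^n·∏_{s=0}^{n-1} [(c^{2s+1} + d·x_{-1}·y_0·(1 - c^{2s+1})/(1 - c)) / (a^{2s+2} + b·x_0·y_{-1}·(1 - a^{2s+2})/(1 - a))], where x_{-1}^{1-n} denotes an integer power of the nonzero real x_{-1}. -/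

import Mathlib

set_option maxHeartbeats 1000000

theorem stmt_15 (x y : ℤ → ℝ) (a b c d : ℝ) (ha : a ≠ 1) (hc : c ≠ 1)
    (hx : ∀ n : ℤ, -1 ≤ n → x n ≠ 0) (hy : ∀ n : ℤ, -1 ≤ n → y n ≠ 0)
    (hda : ∀ n : ℕ, a + b * (x n * y ((n : ℤ) - 1)) ≠ 0)
    (hdc : ∀ n : ℕ, c + d * (x ((n : ℤ) - 1) * y n) ≠ 0)
    (hxe : ∀ n : ℕ, x ((n : ℤ) + 1) =
      x n * y ((n : ℤ) - 1) / (y n * (a + b * (x n * y ((n : ℤ) - 1)))))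
    (hye : ∀ n : ℕ, y ((n : ℤ) + 1) =
      x ((n : ℤ) - 1) * y n / (x n * (c + d * (x ((n : ℤ) - 1) * y n)))) :
    ∀ n : ℕ,
      x (2 * (n : ℤ) - 1) =
        x (-1) ^ (1 - (n : ℤ)) * (x 0 * y (-1) / y 0) ^ n *
          ∏ s ∈ Finset.range n,
            (c ^ (2 * s) + d * x (-1) * y 0 * ((1 - c ^ (2 * s)) / (1 - c))) /
            (a ^ (2 * s + 1) + b * x 0 * y (-1) * ((1 - a ^ (2 * s + 1)) / (1 - a))) ∧
      x (2 * (n : ℤ)) =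
        x 0 ^ (n + 1) * (y (-1) / (x (-1) * y 0)) ^ n *
          ∏ s ∈ Finset.range n,
            (c ^ (2 * s + 1) + d * x (-1) * y 0 * ((1 - c ^ (2 * s + 1)) / (1 - c))) /
            (a ^ (2 * s + 2) + b * x 0 * y (-1) * ((1 - a ^ (2 * s + 2)) / (1 - a))) := by
  set u : ℕ → ℝ := fun n => x n * y ((n : ℤ) - 1) with hu_def
  set v : ℕ → ℝ := fun n => x ((n : ℤ) - 1) * y n with hv_def
  set A : ℕ → ℝ := fun n => a ^ n + b * (u 0) * ((1 - a ^ n) / (1 - a)) with hA_def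
  set C : ℕ → ℝ := fun n => c ^ n + d * (v 0) * ((1 - c ^ n) / (1 - c)) with hC_def
  have hxm1 : x (-1) ≠ 0 := hx (-1) le_rfl
  have hym1 : y (-1) ≠ 0 := hy (-1) le_rfl
  have hx0 : x 0 ≠ 0 := hx 0 (by norm_num)
  have hy0 : y 0 ≠ 0 := hy 0 (by norm_num)
  have h1a : (1 : ℝ) - a ≠ 0 := sub_ne_zero.mpr (Ne.symm ha)
  have h1c : (1 : ℝ) - c ≠ 0 := sub_ne_zero.mpr (Ne.symm hc)
  have hu0 : u 0 = x 0 * y (-1) := by simp only [hu_def]; norm_num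
  have hv00 : v 0 = x (-1) * y 0 := by simp only [hv_def]; norm_num
  have hun : ∀ n : ℕ, u n ≠ 0 := fun n =>
    mul_ne_zero (hx n (by omega)) (hy ((n : ℤ) - 1) (by omega))
  have hvn : ∀ n : ℕ, v n ≠ 0 := fun n =>
    mul_ne_zero (hx ((n : ℤ) - 1) (by omega)) (hy n (by omega))
  have hu0ne : u 0 ≠ 0 := hun 0
  have hv0ne : v 0 ≠ 0 := hvn 0
  have hA : ∀ n : ℕ, u n * A n = u 0 := by
    intro n
    induction n with
    | zero =>
      have : A 0 = 1 := by simp [hA_def]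
      rw [this, mul_one]
    | succ n ih =>
      have hA1 : A (n + 1) = a * A n + b * u 0 := by
        simp only [hA_def]
        field_simp
        ring
      have hrec : u (n + 1) * (a + b * u n) = u n := by
        have e1 : u (n + 1) = x ((n : ℤ) + 1) * y ((n : ℤ)) := by
          simp only [hu_def]; push_cast; norm_num
        have e2 : u n = x (n : ℤ) * y ((n : ℤ) - 1) := by simp only [hu_def]
        rw [e1, e2, hxe n]
        have hyn : y (n : ℤ) ≠ 0 := hy n (by omega)
        have hD := hda n
        rw [div_mul_eq_mul_div, div_mul_eq_mul_div, div_eq_iff (mul_ne_zero hyn hD)]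
        ring
      rw [hA1]
      linear_combination A n * hrec + (1 - b * u (n + 1)) * ih
  have hC : ∀ n : ℕ, v n * C n = v 0 := by
    intro n
    induction n with
    | zero =>
      have : C 0 = 1 := by simp [hC_def]
      rw [this, mul_one]
    | succ n ih =>
      have hC1 : C (n + 1) = c * C n + d * v 0 := by
        simp only [hC_def]
        field_simp
        ring
      have hrec : v (n + 1) * (c + d * v n) = v n := by
        have e1 : v (n + 1) = x ((n : ℤ)) * y ((n : ℤ) + 1) := by
          simp only [hv_def]; push_cast; norm_num
        have e2 : v n = x ((n : ℤ) - 1) * y (n : ℤ) := by simp only [hv_def]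
        rw [e1, e2, hye n]
        have hxn : x (n : ℤ) ≠ 0 := hx n (by omega)
        have hD := hdc n
        rw [mul_div_assoc', div_mul_eq_mul_div, div_eq_iff (mul_ne_zero hxn hD)]
        ring
      rw [hC1]
      linear_combination C n * hrec + (1 - d * v (n + 1)) * ih
  have hAne : ∀ n : ℕ, A n ≠ 0 := fun n => by
    intro h
    apply hu0ne
    rw [← hA n, h, mul_zero]
  have hCne : ∀ n : ℕ, C n ≠ 0 := fun n => by
    intro h
    apply hv0ne
    rw [← hC n, h, mul_zero]
  have hstep : ∀ m : ℕ, x ((m : ℤ) + 1) * (v 0 * A (m + 1)) = x ((m : ℤ) - 1) * (u 0 * C m) := by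
    intro m
    have h1 : u (m + 1) = x ((m : ℤ) + 1) * y (m : ℤ) := by
      simp only [hu_def]; push_cast; norm_num
    have h2 : v m = x ((m : ℤ) - 1) * y (m : ℤ) := by simp only [hv_def]
    calc x ((m : ℤ) + 1) * (v 0 * A (m + 1))
        = x ((m : ℤ) + 1) * (v m * C m * A (m + 1)) := by rw [hC m]
      _ = x ((m : ℤ) - 1) * ((u (m + 1) * A (m + 1)) * C m) := by rw [h1, h2]; ring
      _ = x ((m : ℤ) - 1) * (u 0 * C m) := by rw [hA (m + 1)]
  have hodd : ∀ n : ℕ, x (2 * (n : ℤ) - 1) =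
      x (-1) ^ (1 - (n : ℤ)) * (x 0 * y (-1) / y 0) ^ n *
        ∏ s ∈ Finset.range n, C (2 * s) / A (2 * s + 1) := by
    intro n
    induction n with
    | zero => norm_num
    | succ n ih =>
      have hs := hstep (2 * n)
      have e1 : ((2 * n : ℕ) : ℤ) + 1 = 2 * (n : ℤ) + 1 := by push_cast; ring
      have e2 : ((2 * n : ℕ) : ℤ) - 1 = 2 * (n : ℤ) - 1 := by push_cast; ring
      rw [e1, e2] at hs
      have hx' : x (2 * (n : ℤ) + 1) = x (2 * (n : ℤ) - 1) * (u 0 * C (2 * n)) / (v 0 * A (2 * n + 1)) := by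
        rw [eq_div_iff (mul_ne_zero hv0ne (hAne (2 * n + 1)))]
        exact hs
      have e3 : 2 * ((n : ℤ) + 1) - 1 = 2 * (n : ℤ) + 1 := by ring
      have e4 : (1 : ℤ) - ((n : ℤ) + 1) = (1 - (n : ℤ)) - 1 := by ring
      push_cast
      rw [e3, hx', ih, Finset.prod_range_succ, e4, zpow_sub_one₀ hxm1, hu0, hv00,
        pow_succ]
      have ht : x (-1) ^ (1 - (n : ℤ)) ≠ 0 := zpow_ne_zero _ hxm1
      set t := x (-1) ^ (1 - (n : ℤ)) with htd
      set P := ∏ s ∈ Finset.range n, C (2 * s) / A (2 * s + 1) with hPd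
      field_simp
  have heven : ∀ n : ℕ, x (2 * (n : ℤ)) =
      x 0 ^ (n + 1) * (y (-1) / (x (-1) * y 0)) ^ n *
        ∏ s ∈ Finset.range n, C (2 * s + 1) / A (2 * s + 2) := by
    intro n
    induction n with
    | zero => norm_num
    | succ n ih =>
      have hs := hstep (2 * n + 1)
      have e1 : ((2 * n + 1 : ℕ) : ℤ) + 1 = 2 * ((n : ℤ) + 1) := by push_cast; ring
      have e2 : ((2 * n + 1 : ℕ) : ℤ) - 1 = 2 * (n : ℤ) := by push_cast; ring
      rw [e1, e2] at hs
      have hx' : x (2 * ((n : ℤ) + 1)) = x (2 * (n : ℤ)) * (u 0 * C (2 * n + 1)) / (v 0 * A (2 * n + 2)) := by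
        rw [eq_div_iff (mul_ne_zero hv0ne (hAne (2 * n + 2)))]
        exact hs
      push_cast
      rw [hx', ih, Finset.prod_range_succ, hu0, hv00, pow_succ, pow_succ]
      set P := ∏ s ∈ Finset.range n, C (2 * s + 1) / A (2 * s + 2) with hPd
      field_simp
      ring_nf
      field_simp
  intro n
  constructor
  · rw [hodd n]
    congr 1
    refine Finset.prod_congr rfl fun s _ => ?_
    simp only [hA_def, hC_def]
    rw [hu0, hv00]
    ring
  · rw [heven n]
    congr 1
    refine Finset.prod_congr rfl fun s _ => ?_
    simp only [hA_def, hC_def]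
    rw [hu0, hv00]
    ring
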